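/- Let (B_i) be a sequence of balls in [0,1]^d ⊆ ℝ^d whose diameters tend to 0 and such that the Lebesgue measure of limsup_{i→∞} B_i equals 1. Then for every axis-parallel closed cube C ⊆ [0,1]^d and every ε ∈ (0,1), the union ⋃_{i : B_i ⊆ C} B_i contains (1−ε)C up to a set of Lebesgue measure zero, i.e. λ( (1−ε)C \ ⋃_{i : B_i ⊆ C} B_i ) = 0, where (1−ε)C denotes the cube with the same center as C and side length (1−ε) times that of C. -/

import Mathlib

open MeasureTheory Metric Set Filter ENNReal

/-- `limsup` of a sequence of sets: `⋂ n, ⋃ i ≥ n, A i`. -/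
def slimsup {X : Type*} (A : ℕ → Set X) : Set X :=
  ⋂ n, ⋃ i, ⋃ (_ : n ≤ i), A i

/-- The unit cube `[0,1]^d` in `ℝ^d`. -/
def unitCube (d : ℕ) : Set (EuclideanSpace ℝ (Fin d)) :=
  {x | ∀ i, x i ∈ Set.Icc (0 : ℝ) 1}

/-- The generalized singular value function
`φ^s(E) = sup_μ inf_{x ∈ E} inf_{r > 0} r^s / μ(B_r(x))`,
the supremum over Borel probability measures carried by `E`. -/
noncomputable def phi {d : ℕ} (s : ℝ) (E : Set (EuclideanSpace ℝ (Fin d))) : ℝ≥0∞ :=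
  ⨆ (μ : Measure (EuclideanSpace ℝ (Fin d))) (_ : IsProbabilityMeasure μ) (_ : μ Eᶜ = 0),
    ⨅ (x : EuclideanSpace ℝ (Fin d)) (_ : x ∈ E) (r : ℝ) (_ : 0 < r),
      ENNReal.ofReal (r ^ s) / μ (closedBall x r)

/-- Axis-parallel closed cube with center `z` and half-side `h`. -/
def cube {d : ℕ} (z : EuclideanSpace ℝ (Fin d)) (h : ℝ) : Set (EuclideanSpace ℝ (Fin d)) :=
  {x | ∀ i, |x i - z i| ≤ h}

lemma volume_unitCube (d : ℕ) : volume (unitCube d) = 1 := by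
  have h := (EuclideanSpace.volume_preserving_symm_measurableEquiv_toLp (Fin d)).measure_preimage
    (s := Set.univ.pi fun _ => Set.Icc (0:ℝ) 1)
    (MeasurableSet.univ_pi (fun _ => measurableSet_Icc)).nullMeasurableSet
  have he : unitCube d = (MeasurableEquiv.toLp 2 (Fin d → ℝ)).symm ⁻¹'
      (Set.univ.pi fun _ => Set.Icc (0:ℝ) 1) := by
    ext y
    simp [unitCube, Set.mem_pi, Pi.le_def, WithLp.equiv,
      Equiv.refl, Equiv.coe_fn_mk, id_eq, forall_and]
  rw [he, h, volume_pi_pi]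
  simp [Real.volume_Icc]

lemma coord_le_dist {d : ℕ} (w y : EuclideanSpace ℝ (Fin d)) (j : Fin d) :
    |w j - y j| ≤ dist w y := by
  rw [EuclideanSpace.dist_eq]
  have : |w j - y j| = Real.sqrt (dist (w j) (y j) ^ 2) := by
    rw [Real.sqrt_sq_eq_abs, Real.dist_eq, abs_abs]
  rw [this]
  apply Real.sqrt_le_sqrt
  exact Finset.single_le_sum (f := fun i => dist (w i) (y i) ^ 2) (fun i _ => sq_nonneg _)
    (Finset.mem_univ j)

/-- If the balls `B_i = B(x_i, r_i) ⊆ [0,1]^d` have radii tending to `0` and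
`λ(limsup B_i) = 1`, then for every axis-parallel closed cube `C ⊆ [0,1]^d` and every
`ε ∈ (0,1)` the union of those `B_i` contained in `C` covers the shrunken cube `(1-ε)C`
up to Lebesgue measure zero. -/
theorem shrunken_cube_covered_ae
    (d : ℕ) (x : ℕ → EuclideanSpace ℝ (Fin d)) (r : ℕ → ℝ)
    (hr : ∀ i, 0 < r i)
    (hBcube : ∀ i, closedBall (x i) (r i) ⊆ unitCube d)
    (hdiam : Tendsto r atTop (nhds 0))
    (hfull : volume (slimsup fun i => closedBall (x i) (r i)) = 1) :
    ∀ (z : EuclideanSpace ℝ (Fin d)) (h : ℝ), 0 < h → cube z h ⊆ unitCube d →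
      ∀ ε : ℝ, ε ∈ Set.Ioo (0 : ℝ) 1 →
        volume (cube z ((1 - ε) * h) \
          ⋃ i, ⋃ (_ : closedBall (x i) (r i) ⊆ cube z h), closedBall (x i) (r i)) = 0 := by
  intro z h hh hCsub ε hε
  set S := slimsup fun i => closedBall (x i) (r i) with hS
  have hSmeas : MeasurableSet S := by
    refine MeasurableSet.iInter fun n => MeasurableSet.iUnion fun i =>
      MeasurableSet.iUnion fun _ => measurableSet_closedBall
  have hSsub : S ⊆ unitCube d := by
    intro y hy
    obtain ⟨i, hyi⟩ := by
      simpa using Set.mem_iInter.1 hy 0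
    exact hBcube i (mem_closedBall.mpr hyi)
  have hnull : volume (unitCube d \ S) = 0 := by
    rw [measure_diff hSsub hSmeas.nullMeasurableSet (by rw [hfull]; exact one_ne_top),
      hfull, volume_unitCube]
    simp
  refine measure_mono_null ?_ hnull
  rintro y ⟨hy1, hy2⟩
  have hyc : y ∈ cube z h := by
    intro j
    refine (hy1 j).trans ?_
    nlinarith [hε.1, hε.2]
  refine ⟨hCsub hyc, fun hyS => hy2 ?_⟩
  -- find large i with y ∈ B_i and r i small
  obtain ⟨n, hn⟩ : ∃ n, ∀ i ≥ n, r i < ε * h / 2 := by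
    have := (hdiam.eventually (gt_mem_nhds (show 0 < ε * h / 2 by have := hε.1; positivity)))
    exact eventually_atTop.1 this
  obtain ⟨i, hin, hyi⟩ := by
    simpa using Set.mem_iInter.1 hyS n
  refine Set.mem_iUnion.2 ⟨i, Set.mem_iUnion.2 ⟨?_, mem_closedBall.mpr hyi⟩⟩
  intro w hw j
  have hd : dist w y ≤ 2 * r i := by
    have ht := dist_triangle w (x i) y
    rw [dist_comm (x i) y] at ht
    rw [mem_closedBall] at hw
    linarith
  have h1 : |w j - y j| ≤ 2 * r i := (coord_le_dist w y j).trans hd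
  have h2 : |y j - z j| ≤ (1 - ε) * h := hy1 j
  have := hn i hin
  calc |w j - z j| ≤ |w j - y j| + |y j - z j| := abs_sub_le _ _ _
    _ ≤ 2 * r i + (1 - ε) * h := add_le_add h1 h2
    _ ≤ h := by nlinarith
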